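/- Let m, n ≥ 0 be integers with p = 2m+n ≥ 2 and let Δ ≥ 5 be an integer. Let C be an (m,n)-colored mixed graph whose underlying graph is complete and which has property Q^{Δ-1,j}_{1+(Δ-j)(Δ-2)}. Then every (m,n)-colored mixed graph G whose underlying simple graph has maximum degree at most Δ and degeneracy at most Δ-1 admits a homomorphism to C. -/

import Mathlib

/-- The possible kinds of links from a vertex `u` to a vertex `v` in an
`(m,n)`-colored mixed graph: an arc `u → v` of one of `m` colors, an arc
`v → u` of one of `m` colors, or an (unoriented) edge of one of `n` colors. -/
inductive Link (m n : ℕ) : Type where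
  | arcOut : Fin m → Link m n
  | arcIn : Fin m → Link m n
  | edge : Fin n → Link m n

/-- The link as seen from the other endpoint. -/
def Link.flip {m n : ℕ} : Link m n → Link m n
  | .arcOut c => .arcIn c
  | .arcIn c => .arcOut c
  | .edge c => .edge c

/-- An `(m,n)`-colored mixed graph on vertex type `V`: between any two distinct
vertices there is at most one link (a colored arc in either direction or a
colored edge), and there are no loops. -/
structure CMGraph (m n : ℕ) (V : Type) where
  link : V → V → Option (Link m n)
  symm : ∀ u v, link v u = (link u v).map Link.flip
  loopless : ∀ v, link v v = none

/-- The underlying simple graph of an `(m,n)`-colored mixed graph. -/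
def CMGraph.underlying {m n : ℕ} {V : Type} (G : CMGraph m n V) : SimpleGraph V where
  Adj u v := (G.link u v).isSome
  symm := by
    constructor
    intro u v h
    change (G.link u v).isSome at h
    show (G.link v u).isSome
    rw [G.symm u v]
    rcases hx : G.link u v with _ | l
    · rw [hx] at h; simp at h
    · simp
  loopless := by
    constructor
    intro v h
    change (G.link v v).isSome at h
    rw [G.loopless v] at h
    simp at h

/-- A homomorphism of `(m,n)`-colored mixed graphs: arcs map to arcs of the same
color and direction, edges map to edges of the same color. -/
def IsCMHom {m n : ℕ} {V W : Type} (G : CMGraph m n V) (H : CMGraph m n W)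
    (f : V → W) : Prop :=
  ∀ u v l, G.link u v = some l → H.link (f u) (f v) = some l

/-- `G` admits a homomorphism to some `(m,n)`-colored mixed graph on at most `k`
vertices, i.e. `χ_{(m,n)}(G) ≤ k`. -/
def CMChromAtMost {m n : ℕ} {V : Type} (G : CMGraph m n V) (k : ℕ) : Prop :=
  ∃ (W : Type) (inst : Fintype W) (H : CMGraph m n W) (f : V → W),
    @Fintype.card W inst ≤ k ∧ IsCMHom G H f

/-- Every `(m,n)`-colored mixed graph admitting a homomorphism from `G` has at
least `k` vertices, i.e. `χ_{(m,n)}(G) ≥ k`. -/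
def CMChromAtLeast {m n : ℕ} {V : Type} (G : CMGraph m n V) (k : ℕ) : Prop :=
  ∀ (W : Type) (inst : Fintype W) (H : CMGraph m n W) (f : V → W),
    IsCMHom G H f → k ≤ @Fintype.card W inst

/-- The acyclic chromatic number of `G` is at most `k`: there is a proper
`k`-coloring in which the union of any two color classes induces a forest. -/
def AcycChromAtMost {V : Type} (G : SimpleGraph V) (k : ℕ) : Prop :=
  ∃ c : V → Fin k, (∀ u v, G.Adj u v → c u ≠ c v) ∧
    ∀ i j : Fin k, (G.induce {v | c v = i ∨ c v = j}).IsAcyclic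

/-- The edge set of `G` can be decomposed into `r` forests. -/
def ArbAtMost {V : Type} (G : SimpleGraph V) (r : ℕ) : Prop :=
  ∃ F : Fin r → SimpleGraph V,
    (∀ i, F i ≤ G) ∧
    (∀ i, (F i).IsAcyclic) ∧
    (∀ u v, G.Adj u v → ∃ i, (F i).Adj u v) ∧
    (∀ i j, i ≠ j → ∀ u v, ¬ ((F i).Adj u v ∧ (F j).Adj u v))

/-- Every vertex of `G` has degree at most `d`. -/
def MaxDegAtMost {V : Type} (G : SimpleGraph V) (d : ℕ) : Prop :=
  ∀ v, (G.neighborSet v).ncard ≤ d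

/-- `G` is `d`-degenerate: every nonempty (induced) subgraph has a vertex of
degree at most `d` in it. -/
def DegenAtMost {V : Type} (G : SimpleGraph V) (d : ℕ) : Prop :=
  ∀ s : Set V, s.Nonempty → ∃ v ∈ s, (G.neighborSet v ∩ s).ncard ≤ d


lemma Link.flip_flip {m n : ℕ} (l : Link m n) : l.flip.flip = l := by cases l <;> rfl

lemma CMGraph.adj_iff {m n : ℕ} {V : Type} (G : CMGraph m n V) (u v : V) :
    G.underlying.Adj u v ↔ (G.link u v).isSome := Iff.rfl

/-- Let `p = 2m+n ≥ 2`, `Δ ≥ 5`, and let `C` be an `(m,n)`-colored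
mixed graph whose underlying graph is complete and which has property
`Q^{Δ-1,j}_{1+(Δ-j)(Δ-2)}`. Then every `(m,n)`-colored mixed graph whose underlying
simple graph has maximum degree at most `Δ` and degeneracy at most `Δ-1` admits a
homomorphism to `C`. -/
theorem hom_to_complete_with_property_Q (m n Δ : ℕ) (hp : 2 ≤ 2 * m + n) (hΔ : 5 ≤ Δ)
    (W : Type) [Fintype W] (C : CMGraph m n W)
    (hcomplete : ∀ u v : W, u ≠ v → (C.link u v).isSome)
    (hQ : ∀ j : ℕ, j ≤ Δ - 1 →
      ∀ J : Fin j → W, Function.Injective J →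
        ∀ a : Fin j → Link m n,
          1 + (Δ - j) * (Δ - 2) ≤
            {u | ∀ i : Fin j, C.link (J i) u = some (a i)}.ncard)
    (V : Type) [Fintype V] (G : CMGraph m n V)
    (hdeg : MaxDegAtMost G.underlying Δ)
    (hdegen : DegenAtMost G.underlying (Δ - 1)) :
    ∃ f : V → W, IsCMHom G C f := by
  classical
  -- W is nonempty
  have hW : Nonempty W := by
    have h0 := hQ 0 (Nat.zero_le _) (fun i => i.elim0) (fun i => i.elim0) (fun i => i.elim0)
    have : ({u : W | ∀ i : Fin 0, C.link (i.elim0) u = some (i.elim0)}).Nonempty := by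
      apply Set.nonempty_of_ncard_ne_zero
      omega
    obtain ⟨w, _⟩ := this
    exact ⟨w⟩
  set SG := G.underlying with hSG
  have key : ∀ (N : ℕ) (s : Set V), s.ncard ≤ N →
      (∀ x ∉ s, (SG.neighborSet x ∩ s).ncard ≤ Δ - 1) →
      ∃ f : V → W,
        (∀ u ∈ s, ∀ v ∈ s, ∀ l, G.link u v = some l → C.link (f u) (f v) = some l) ∧
        (∀ x ∉ s, Set.InjOn f (SG.neighborSet x ∩ s)) := by
    intro N
    induction N with
    | zero =>
      intro s hcard _
      have hse : s = ∅ := by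
        rw [← Set.ncard_eq_zero (Set.toFinite s)]; omega
      subst hse
      exact ⟨fun _ => Classical.arbitrary W, by simp, by simp⟩
    | succ N IH =>
      intro s hcard hyp
      rcases s.eq_empty_or_nonempty with hse | hs
      · subst hse
        exact ⟨fun _ => Classical.arbitrary W, by simp, by simp⟩
      obtain ⟨v, hvs, hvdeg⟩ := hdegen s hs
      set s' : Set V := s \ {v} with hs'
      have hvns' : v ∉ s' := by simp [hs']
      have hs'sub : s' ⊆ s := Set.diff_subset
      have hs'card : s'.ncard ≤ N := by
        have h1 : s'.ncard = s.ncard - 1 :=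
          Set.ncard_diff_singleton_of_mem hvs
        have h2 : 0 < s.ncard := (Set.ncard_pos (Set.toFinite s)).mpr hs
        omega
      have hyp' : ∀ x ∉ s', (SG.neighborSet x ∩ s').ncard ≤ Δ - 1 := by
        intro x hx
        by_cases hxv : x = v
        · subst hxv
          exact le_trans (Set.ncard_le_ncard (Set.inter_subset_inter_right _ hs'sub)
            (Set.toFinite _)) hvdeg
        · have hxs : x ∉ s := by
            intro hxs
            exact hx ⟨hxs, hxv⟩
          exact le_trans (Set.ncard_le_ncard (Set.inter_subset_inter_right _ hs'sub)
            (Set.toFinite _)) (hyp x hxs)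
      obtain ⟨f', hf1, hf2⟩ := IH s' hs'card hyp'
      -- colored neighbors of v
      set Ns : Set V := SG.neighborSet v ∩ s' with hNs
      have hNs_eq : Ns = SG.neighborSet v ∩ s := by
        ext u
        simp only [hNs, hs', Set.mem_inter_iff, Set.mem_diff, Set.mem_singleton_iff]
        constructor
        · rintro ⟨h1, h2, _⟩; exact ⟨h1, h2⟩
        · rintro ⟨h1, h2⟩
          refine ⟨h1, h2, ?_⟩
          rintro rfl
          exact SG.irrefl h1
      set j : ℕ := Ns.ncard with hjdef
      have hj : j ≤ Δ - 1 := by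
        rw [hjdef, hNs_eq]; exact hvdeg
      -- enumerate Ns
      set T : Finset V := (Set.toFinite Ns).toFinset with hT
      have hTcard : Fintype.card T = j := by
        rw [Fintype.card_coe, hjdef, Set.ncard_eq_toFinset_card Ns (Set.toFinite Ns)]
      set e : T ≃ Fin j := Fintype.equivFinOfCardEq hTcard with he
      set uu : Fin j → V := fun i => ((e.symm i : T) : V) with huu
      have hmemuu : ∀ i, uu i ∈ Ns := fun i => (Set.Finite.mem_toFinset _).mp (e.symm i).2
      have hlinksome : ∀ u ∈ Ns, (G.link u v).isSome := by
        intro u hu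
        have : SG.Adj u v := SG.adj_symm hu.1
        exact this
      set a : Fin j → Link m n := fun i => (G.link (uu i) v).get (hlinksome _ (hmemuu i)) with ha
      have ha_spec : ∀ i l, G.link (uu i) v = some l → a i = l := by
        intro i l hl
        have : some (a i) = G.link (uu i) v := (Option.some_get _)
        rw [hl] at this
        exact (Option.some_inj.mp this.symm).symm
      set J : Fin j → W := fun i => f' (uu i) with hJ
      have huu_inj : Function.Injective uu := by
        intro i1 i2 h12
        have : e.symm i1 = e.symm i2 := Subtype.ext h12
        exact e.symm.injective this
      have hJinj : Function.Injective J := by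
        intro i1 i2 h12
        exact huu_inj (hf2 v hvns' (hmemuu i1) (hmemuu i2) h12)
      have hA := hQ j hj J hJinj a
      set A : Set W := {u | ∀ i : Fin j, C.link (J i) u = some (a i)} with hAdef
      -- bad set
      set T2 : Set V := SG.neighborSet v \ s with hT2
      have hT2card : T2.ncard ≤ Δ - j := by
        rw [hT2]
        have h1 := Set.ncard_inter_add_ncard_diff_eq_ncard (SG.neighborSet v) s (Set.toFinite _)
        have h2 : (SG.neighborSet v ∩ s).ncard = j := by rw [hjdef, hNs_eq]
        have h3 := hdeg v
        omega
      set T2f : Finset V := (Set.toFinite T2).toFinset with hT2f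
      have hT2fcard : T2f.card ≤ Δ - j := by
        rw [hT2f, ← Set.ncard_eq_toFinset_card T2 (Set.toFinite T2)]
        exact hT2card
      set Bf : Finset W :=
        T2f.biUnion (fun x => (Set.toFinite (f' '' (SG.neighborSet x ∩ s'))).toFinset) with hBf
      have hBfcard : Bf.card ≤ (Δ - j) * (Δ - 2) := by
        have h1 : Bf.card ≤ ∑ x ∈ T2f, ((Set.toFinite (f' '' (SG.neighborSet x ∩ s'))).toFinset).card :=
          Finset.card_biUnion_le
        have h2 : ∀ x ∈ T2f, ((Set.toFinite (f' '' (SG.neighborSet x ∩ s'))).toFinset).card ≤ Δ - 2 := by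
          intro x hx
          have hxT2 : x ∈ T2 := (Set.Finite.mem_toFinset _).mp hx
          have hvmem : v ∈ SG.neighborSet x ∩ s := ⟨SG.adj_symm hxT2.1, hvs⟩
          have heq : SG.neighborSet x ∩ s' = (SG.neighborSet x ∩ s) \ {v} := by
            rw [hs']; ext u; simp [Set.mem_inter_iff, Set.mem_diff]; tauto
          have h4 : (SG.neighborSet x ∩ s').ncard ≤ Δ - 2 := by
            rw [heq, Set.ncard_diff_singleton_of_mem hvmem]
            have := hyp x hxT2.2
            omega
          rw [← Set.ncard_eq_toFinset_card _ (Set.toFinite _)]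
          exact le_trans (Set.ncard_image_le (Set.toFinite _)) h4
        calc Bf.card ≤ ∑ x ∈ T2f, ((Set.toFinite (f' '' (SG.neighborSet x ∩ s'))).toFinset).card := h1
          _ ≤ ∑ _x ∈ T2f, (Δ - 2) := Finset.sum_le_sum h2
          _ = T2f.card * (Δ - 2) := by rw [Finset.sum_const, smul_eq_mul]
          _ ≤ (Δ - j) * (Δ - 2) := Nat.mul_le_mul_right _ hT2fcard
      -- choose c
      have hexc : ∃ c ∈ A, c ∉ Bf := by
        by_contra hcon
        push_neg at hcon
        have hsub : A ⊆ ↑Bf := fun c hc => hcon c hc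
        have h5 : A.ncard ≤ Bf.card := by
          have := Set.ncard_le_ncard hsub (Finset.finite_toSet Bf)
          rwa [Set.ncard_coe_finset] at this
        have h6 := le_trans hA (le_trans h5 hBfcard)
        omega
      obtain ⟨c, hcA, hcB⟩ := hexc
      have hc1 : ∀ i : Fin j, C.link (J i) c = some (a i) := hcA
      have hcv : ∀ u ∈ Ns, ∀ l, G.link u v = some l → C.link (f' u) c = some l := by
        intro u hu l hl
        have huT : u ∈ T := (Set.Finite.mem_toFinset _).mpr hu
        set i : Fin j := e ⟨u, huT⟩ with hi
        have huui : uu i = u := by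
          rw [huu, hi]
          simp
        have := hc1 i
        rw [hJ] at this
        simp only at this
        rw [huui] at this
        rw [ha_spec i l (by rw [huui]; exact hl)] at this
        exact this
      set f : V → W := Function.update f' v c with hf
      have hfv : f v = c := Function.update_self v c f'
      have hfne : ∀ u, u ≠ v → f u = f' u := fun u hu => Function.update_of_ne hu c f'
      refine ⟨f, ?_, ?_⟩
      · -- hom on s
        intro u1 hu1 u2 hu2 l hl
        by_cases h1 : u1 = v
        · by_cases h2 : u2 = v
          · rw [h1, h2, G.loopless] at hl
            exact absurd hl (by simp)
          · rw [h1] at hl ⊢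
            have hadj : SG.Adj v u2 := by
              rw [CMGraph.adj_iff, hl]; rfl
            have hu2Ns : u2 ∈ Ns := ⟨hadj, hu2, h2⟩
            have hl2 : G.link u2 v = some l.flip := by
              rw [G.symm, hl]; rfl
            have hcc := hcv u2 hu2Ns l.flip hl2
            rw [hfv, hfne u2 h2]
            rw [C.symm, hcc]
            simp [Link.flip_flip]
        · by_cases h2 : u2 = v
          · rw [h2] at hl ⊢
            have hadj : SG.Adj u1 v := by
              rw [CMGraph.adj_iff, hl]; rfl
            have hu1Ns : u1 ∈ Ns := ⟨SG.adj_symm hadj, hu1, h1⟩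
            rw [hfv, hfne u1 h1]
            exact hcv u1 hu1Ns l hl
          · rw [hfne u1 h1, hfne u2 h2]
            exact hf1 u1 ⟨hu1, h1⟩ u2 ⟨hu2, h2⟩ l hl
      · -- injectivity invariant
        intro x hx
        have hxs' : x ∉ s' := fun hxx => hx (hs'sub hxx)
        intro u1 hu1 u2 hu2 hfe
        by_cases h1 : u1 = v
        · by_cases h2 : u2 = v
          · rw [h1, h2]
          · exfalso
            have hxv : SG.Adj x v := h1 ▸ hu1.1
            have hxT2 : x ∈ T2 := ⟨SG.adj_symm hxv, hx⟩
            have hmem : f' u2 ∈ Bf := by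
              rw [hBf]
              apply Finset.mem_biUnion.mpr
              refine ⟨x, (Set.Finite.mem_toFinset _).mpr hxT2, ?_⟩
              apply (Set.Finite.mem_toFinset _).mpr
              exact ⟨u2, ⟨hu2.1, hu2.2, h2⟩, rfl⟩
            rw [h1, hfv, hfne u2 h2] at hfe
            rw [← hfe] at hmem
            exact hcB hmem
        · by_cases h2 : u2 = v
          · exfalso
            have hxv : SG.Adj x v := h2 ▸ hu2.1
            have hxT2 : x ∈ T2 := ⟨SG.adj_symm hxv, hx⟩
            have hmem : f' u1 ∈ Bf := by
              rw [hBf]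
              apply Finset.mem_biUnion.mpr
              refine ⟨x, (Set.Finite.mem_toFinset _).mpr hxT2, ?_⟩
              apply (Set.Finite.mem_toFinset _).mpr
              exact ⟨u1, ⟨hu1.1, hu1.2, h1⟩, rfl⟩
            rw [h2, hfv, hfne u1 h1] at hfe
            rw [hfe] at hmem
            exact hcB hmem
          · rw [hfne u1 h1, hfne u2 h2] at hfe
            exact hf2 x hxs' ⟨hu1.1, hu1.2, h1⟩ ⟨hu2.1, hu2.2, h2⟩ hfe
  obtain ⟨f, hf1, _⟩ := key (Fintype.card V) Set.univ
    (by rw [Set.ncard_univ, Nat.card_eq_fintype_card])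
    (by intro x hx; exact absurd (Set.mem_univ x) hx)
  exact ⟨f, fun u v l hl => hf1 u (Set.mem_univ u) v (Set.mem_univ v) l hl⟩
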